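/- arXiv:1509.05587 — 4 statements merged into one kernel-verified Lean document; each statement's English description precedes it below -/
import Mathlib

section
/- Let F be a saturated foliation of degree 3 on ℙ². If p is a singular point with algebraic multiplicity ν(F,p) ≥ 3, then every other singular point s ≠ p satisfies ν(F,s) ≤ 2 — in fact ν(F,s) ≤ 1. -/
open MvPolynomial

/-- Vanishing order at the origin of a formal power series in two variables. -/
noncomputable def mvOrder (A : MvPowerSeries (Fin 2) ℂ) : ℕ :=
  sInf {d : ℕ | ∃ m : Fin 2 →₀ ℕ, m 0 + m 1 = d ∧ MvPowerSeries.coeff m A ≠ 0}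

/-- The algebraic multiplicity `ν` at the point `s` of the foliation whose local (saturated)
defining vector field has components given (up to sign/order) by the polynomials `A`, `B`:
the minimum of the vanishing orders of `A` and `B` at `s`. -/
noncomputable def algMult (A B : MvPolynomial (Fin 2) ℂ) (s : ℂ × ℂ) : ℕ :=
  min
    (mvOrder (MvPolynomial.toMvPowerSeries
      (aeval ![(X 0 : MvPolynomial (Fin 2) ℂ) + C s.1, X 1 + C s.2] A)))
    (mvOrder (MvPolynomial.toMvPowerSeries
      (aeval ![(X 0 : MvPolynomial (Fin 2) ℂ) + C s.1, X 1 + C s.2] B)))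

private lemma order_coeff {P : MvPolynomial (Fin 2) ℂ} {k : ℕ}
    (h : k ≤ mvOrder (MvPolynomial.toMvPowerSeries P)) :
    ∀ m : Fin 2 →₀ ℕ, MvPolynomial.coeff m P ≠ 0 → k ≤ m 0 + m 1 := by
  intro m hm
  refine h.trans (Nat.sInf_le ?_)
  exact ⟨m, rfl, by simpa [MvPolynomial.coeff_coe] using hm⟩

/-- Sum of exponents of a monomial of a homogeneous degree-4 polynomial. -/
private lemma sum_eq_four {h : MvPolynomial (Fin 3) ℂ} (h4 : h.IsHomogeneous 4)
    {d : Fin 3 →₀ ℕ} (hd : MvPolynomial.coeff d h ≠ 0) : ∑ i, d i = 4 := by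
  have h1 := h4 hd
  rw [Finsupp.weight_apply] at h1
  rw [← h1, Finsupp.sum_fintype]
  · simp
  · intro i; rfl

/-- Key divisibility: if the Taylor expansion of `P` at `(q1, q2)` has no terms of degree
less than `k`, then substituting `qᵢ + vᵢ * g` gives a polynomial divisible by `g ^ k`. -/
private lemma pow_dvd_aeval {P : MvPolynomial (Fin 2) ℂ} {q1 q2 : ℂ} {k : ℕ}
    (hc : ∀ m : Fin 2 →₀ ℕ,
      MvPolynomial.coeff m (aeval ![(X 0 : MvPolynomial (Fin 2) ℂ) + C q1, X 1 + C q2] P) ≠ 0 →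
      k ≤ m 0 + m 1)
    (v1 v2 : ℂ) (g : Polynomial ℂ) :
    g ^ k ∣ MvPolynomial.aeval
      ![Polynomial.C q1 + Polynomial.C v1 * g, Polynomial.C q2 + Polynomial.C v2 * g] P := by
  set Q := aeval ![(X 0 : MvPolynomial (Fin 2) ℂ) + C q1, X 1 + C q2] P with hQ
  have hcomp : MvPolynomial.aeval
      ![Polynomial.C q1 + Polynomial.C v1 * g, Polynomial.C q2 + Polynomial.C v2 * g] P
      = MvPolynomial.aeval ![Polynomial.C v1 * g, Polynomial.C v2 * g] Q := by
    rw [hQ, ← AlgHom.comp_apply, comp_aeval]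
    have : (fun i => (MvPolynomial.aeval
        (![Polynomial.C v1 * g, Polynomial.C v2 * g] : Fin 2 → Polynomial ℂ))
          ((![(X 0 : MvPolynomial (Fin 2) ℂ) + C q1, X 1 + C q2]) i))
        = ![Polynomial.C q1 + Polynomial.C v1 * g, Polynomial.C q2 + Polynomial.C v2 * g] := by
      funext i
      fin_cases i <;> simp [Polynomial.algebraMap_eq] <;> ring
    rw [this]
  rw [hcomp, aeval_def, eval₂_eq']
  apply Finset.dvd_sum
  intro d hd
  have hk : k ≤ d 0 + d 1 := hc d (MvPolynomial.mem_support_iff.mp hd)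
  have hprod : (∏ i, (![Polynomial.C v1 * g, Polynomial.C v2 * g] : Fin 2 → Polynomial ℂ) i ^ d i)
      = (Polynomial.C v1 ^ d 0 * Polynomial.C v2 ^ d 1) * g ^ (d 0 + d 1) := by
    rw [Fin.prod_univ_two]
    simp only [Matrix.cons_val_zero, Matrix.cons_val_one, Matrix.head_cons, mul_pow, pow_add]
    ring
  rw [hprod]
  exact Dvd.dvd.mul_left (Dvd.dvd.mul_left (pow_dvd_pow g hk) _) _

/-- Degree bound: substituting degree ≤ 1 polynomials into a homogeneous degree-4 polynomial
gives a univariate polynomial of degree at most 4. -/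
private lemma natDegree_aeval_le {h : MvPolynomial (Fin 3) ℂ} (h4 : h.IsHomogeneous 4)
    (f : Fin 3 → Polynomial ℂ) (hf : ∀ i, (f i).natDegree ≤ 1) :
    (MvPolynomial.aeval f h).natDegree ≤ 4 := by
  rw [aeval_def, eval₂_eq']
  apply Polynomial.natDegree_sum_le_of_forall_le
  intro d hd
  have hsum : ∑ i, d i = 4 := sum_eq_four h4 (MvPolynomial.mem_support_iff.mp hd)
  refine (Polynomial.natDegree_mul_le).trans ?_
  have h1 : (algebraMap ℂ (Polynomial ℂ) (MvPolynomial.coeff d h)).natDegree = 0 := by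
    rw [Polynomial.algebraMap_eq]; exact Polynomial.natDegree_C _
  rw [h1, zero_add]
  refine (Polynomial.natDegree_prod_le _ _).trans ?_
  calc ∑ i, (f i ^ d i).natDegree ≤ ∑ i, d i * 1 := by
        refine Finset.sum_le_sum fun i _ => ?_
        exact Polynomial.natDegree_pow_le.trans (by
          exact Nat.mul_le_mul_left _ (hf i))
    _ = 4 := by simpa using hsum

/-- If a polynomial vanishes under the substitution `X 1 ↦ 0`, then `X 1` divides it. -/
private lemma X1_dvd {P : MvPolynomial (Fin 3) ℂ}
    (h0 : aeval ![(X 0 : MvPolynomial (Fin 3) ℂ), 0, X 2] P = 0) :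
    (X 1 : MvPolynomial (Fin 3) ℂ) ∣ P := by
  have key : ∀ P : MvPolynomial (Fin 3) ℂ,
      (X 1 : MvPolynomial (Fin 3) ℂ) ∣
        (P - aeval ![(X 0 : MvPolynomial (Fin 3) ℂ), 0, X 2] P) := by
    intro P
    induction P using MvPolynomial.induction_on with
    | C a => simp [MvPolynomial.algebraMap_eq]
    | add p q hp hq =>
      have h' := dvd_add hp hq
      convert h' using 1
      rw [map_add]; ring
    | mul_X p i hp =>
      rw [map_mul, aeval_X]
      have heq : p * X i - (aeval ![(X 0 : MvPolynomial (Fin 3) ℂ), 0, X 2] p)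
            * (![(X 0 : MvPolynomial (Fin 3) ℂ), 0, X 2] i)
          = (p - aeval ![(X 0 : MvPolynomial (Fin 3) ℂ), 0, X 2] p) * X i
            + (aeval ![(X 0 : MvPolynomial (Fin 3) ℂ), 0, X 2] p)
              * (X i - ![(X 0 : MvPolynomial (Fin 3) ℂ), 0, X 2] i) := by ring
      rw [heq]
      refine dvd_add (Dvd.dvd.mul_right hp _) (Dvd.dvd.mul_left ?_ _)
      fin_cases i <;> simp
  have h' := key P
  rwa [h0, sub_zero] at h'

private lemma aeval_eq_eval (x : Fin 3 → ℂ) (h : MvPolynomial (Fin 3) ℂ) :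
    MvPolynomial.aeval x h = MvPolynomial.eval x h := by
  rw [MvPolynomial.aeval_def, MvPolynomial.eval, Algebra.algebraMap_self]
  rfl

/-- Scaling property of homogeneous degree-4 polynomials. -/
private lemma eval_scale {h : MvPolynomial (Fin 3) ℂ} (h4 : h.IsHomogeneous 4)
    (z : ℂ) (x : Fin 3 → ℂ) :
    MvPolynomial.eval (fun i => z * x i) h = z ^ 4 * MvPolynomial.eval x h := by
  rw [eval_eq', eval_eq', Finset.mul_sum]
  apply Finset.sum_congr rfl
  intro d hd
  have hsum : ∑ i, d i = 4 := sum_eq_four h4 (MvPolynomial.mem_support_iff.mp hd)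
  simp_rw [mul_pow]
  rw [Finset.prod_mul_distrib, Finset.prod_pow_eq_pow_sum, hsum]
  ring

/-- A homogeneous degree-4 polynomial vanishing on the affine line `t ↦ p + t v` (in the chart
`z = 1`) is divisible by the linear form of the corresponding projective line. -/
private lemma plane_dvd {h : MvPolynomial (Fin 3) ℂ} (h4 : h.IsHomogeneous 4)
    {p1 p2 v1 v2 w1 w2 : ℂ} (hdet : v1 * w2 - v2 * w1 = 1)
    (hvan : ∀ t : ℂ, MvPolynomial.eval ![p1 + t * v1, p2 + t * v2, 1] h = 0) :
    (-(C v2) * (X 0 - C p1 * X 2) + C v1 * (X 1 - C p2 * X 2) : MvPolynomial (Fin 3) ℂ) ∣ h := by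
  set S : MvPolynomial (Fin 3) ℂ →ₐ[ℂ] MvPolynomial (Fin 3) ℂ :=
    aeval ![C p1 * X 2 + C v1 * X 0 + C w1 * X 1, C p2 * X 2 + C v2 * X 0 + C w2 * X 1, X 2]
    with hSdef
  set T : MvPolynomial (Fin 3) ℂ →ₐ[ℂ] MvPolynomial (Fin 3) ℂ :=
    aeval ![C w2 * (X 0 - C p1 * X 2) - C w1 * (X 1 - C p2 * X 2),
           -(C v2) * (X 0 - C p1 * X 2) + C v1 * (X 1 - C p2 * X 2), X 2] with hTdef
  have Ch : (C v1 * C w2 - C v2 * C w1 : MvPolynomial (Fin 3) ℂ) = 1 := by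
    rw [← C_mul, ← C_mul, ← C_sub, hdet, C_1]
  have hS0 : S (X 0) = C p1 * X 2 + C v1 * X 0 + C w1 * X 1 := by rw [hSdef, aeval_X]; simp
  have hS1 : S (X 1) = C p2 * X 2 + C v2 * X 0 + C w2 * X 1 := by rw [hSdef, aeval_X]; simp
  have hS2 : S (X 2) = X 2 := by rw [hSdef, aeval_X]; simp
  have hT0 : T (X 0) = C w2 * (X 0 - C p1 * X 2) - C w1 * (X 1 - C p2 * X 2) := by
    rw [hTdef, aeval_X]; simp
  have hT1 : T (X 1) = -(C v2) * (X 0 - C p1 * X 2) + C v1 * (X 1 - C p2 * X 2) := by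
    rw [hTdef, aeval_X]; simp
  have hT2 : T (X 2) = X 2 := by rw [hTdef, aeval_X]; simp
  have hTC : ∀ r : ℂ, T (C r) = C r := by
    intro r
    rw [hTdef, aeval_C, MvPolynomial.algebraMap_eq]
  have hTS : T.comp S = AlgHom.id ℂ _ := by
    apply MvPolynomial.algHom_ext
    intro i
    fin_cases i
    · show T (S (X 0)) = X 0
      rw [hS0, map_add, map_add, map_mul, map_mul, map_mul, hTC, hTC, hTC, hT0, hT1, hT2]
      linear_combination (X 0 - C p1 * X 2 : MvPolynomial (Fin 3) ℂ) * Ch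
    · show T (S (X 1)) = X 1
      rw [hS1, map_add, map_add, map_mul, map_mul, map_mul, hTC, hTC, hTC, hT0, hT1, hT2]
      linear_combination (X 1 - C p2 * X 2 : MvPolynomial (Fin 3) ℂ) * Ch
    · show T (S (X 2)) = X 2
      rw [hS2, hT2]
  -- Step 1: the substitution `X 1 ↦ 0` kills `S h`.
  have hstep1 : aeval ![(X 0 : MvPolynomial (Fin 3) ℂ), 0, X 2] (S h) = 0 := by
    rw [hSdef, ← AlgHom.comp_apply, comp_aeval]
    apply MvPolynomial.funext
    intro x
    rw [map_zero]
    have hcomp : MvPolynomial.eval x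
        ((aeval fun i => (aeval ![(X 0 : MvPolynomial (Fin 3) ℂ), 0, X 2])
          ((![C p1 * X 2 + C v1 * X 0 + C w1 * X 1,
              C p2 * X 2 + C v2 * X 0 + C w2 * X 1, X 2]) i)) h)
        = MvPolynomial.eval
            ![p1 * x 2 + v1 * x 0, p2 * x 2 + v2 * x 0, x 2] h := by
      rw [← aeval_eq_eval, ← AlgHom.comp_apply, comp_aeval, ← aeval_eq_eval]
      congr 1
      apply MvPolynomial.algHom_ext
      intro i
      rw [aeval_X, aeval_X]
      fin_cases i <;> simp [MvPolynomial.algebraMap_eq] <;> ring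
    rw [hcomp]
    -- the polynomial `q(z) = h(p1 z + v1 x0, p2 z + v2 x0, z)` vanishes for `z ≠ 0`.
    set q : Polynomial ℂ := MvPolynomial.aeval
      ![Polynomial.C p1 * Polynomial.X + Polynomial.C (v1 * x 0),
        Polynomial.C p2 * Polynomial.X + Polynomial.C (v2 * x 0), Polynomial.X] h with hqdef
    have hqeval : ∀ z : ℂ, Polynomial.eval z q
        = MvPolynomial.eval ![p1 * z + v1 * x 0, p2 * z + v2 * x 0, z] h := by
      intro z
      have : (Polynomial.aeval z).comp (MvPolynomial.aeval
          ![Polynomial.C p1 * Polynomial.X + Polynomial.C (v1 * x 0),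
            Polynomial.C p2 * Polynomial.X + Polynomial.C (v2 * x 0), Polynomial.X]) h
          = MvPolynomial.aeval ![p1 * z + v1 * x 0, p2 * z + v2 * x 0, z] h := by
        rw [comp_aeval]
        congr 1
        apply MvPolynomial.algHom_ext
        intro i
        rw [aeval_X, aeval_X]
        fin_cases i <;> simp
      have h2 : Polynomial.eval z q = Polynomial.aeval z q :=
        (congrFun (Polynomial.coe_aeval_eq_eval z) q).symm
      rw [h2, hqdef, ← aeval_eq_eval, ← this]
      rfl
    have hq0 : q = 0 := by
      apply Polynomial.eq_zero_of_infinite_isRoot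
      apply Set.Infinite.mono (s := {z : ℂ | z ≠ 0})
      · intro z hz
        have hzne : (z : ℂ) ≠ 0 := hz
        have : Polynomial.eval z q = 0 := by
          rw [hqeval z]
          have hpt : (![p1 * z + v1 * x 0, p2 * z + v2 * x 0, z] : Fin 3 → ℂ)
              = fun i => z * (![p1 + (x 0 / z) * v1, p2 + (x 0 / z) * v2, 1] i) := by
            funext i
            fin_cases i <;> simp <;> field_simp <;> ring
          rw [hpt, eval_scale h4, hvan (x 0 / z), mul_zero]
        exact this
      · have : ({z : ℂ | z ≠ 0})ᶜ = {0} := by ext z; simp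
        apply Set.infinite_of_finite_compl
        rw [this]
        exact Set.finite_singleton 0
    have := hqeval (x 2)
    rw [hq0, Polynomial.eval_zero] at this
    exact this.symm
  -- Step 2: `X 1 ∣ S h`, hence `T (X 1) ∣ T (S h) = h`.
  have hdvd : (X 1 : MvPolynomial (Fin 3) ℂ) ∣ S h := X1_dvd hstep1
  have := map_dvd T hdvd
  rw [← AlgHom.comp_apply, hTS, AlgHom.id_apply] at this
  simpa [hTdef] using this

/-- Let `F` be a saturated foliation of degree `3` on `ℙ²`, given by a
homogeneous 1-form `a dx + b dy + c dz` of degree `4` with the Euler relation and no common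
factor.  If `p` is a singular point (here taken in the affine chart `{z = 1}`, whose local
singular ideal is generated by `a(x,y,1)` and `b(x,y,1)`) with algebraic multiplicity
`ν(F,p) ≥ 3`, then every other singular point `s ≠ p` satisfies `ν(F,s) ≤ 2` — in fact
`ν(F,s) ≤ 1`. -/
theorem stmt7 (a b c : MvPolynomial (Fin 3) ℂ)
    (ha : a.IsHomogeneous 4) (hb : b.IsHomogeneous 4) (hc : c.IsHomogeneous 4)
    (heuler : X 0 * a + X 1 * b + X 2 * c = 0)
    (hsat : ∀ d : MvPolynomial (Fin 3) ℂ, d ∣ a → d ∣ b → d ∣ c → IsUnit d)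
    (p s : ℂ × ℂ) (hps : s ≠ p)
    (hp : 3 ≤ algMult (aeval ![X 0, X 1, (1 : MvPolynomial (Fin 2) ℂ)] a)
      (aeval ![X 0, X 1, (1 : MvPolynomial (Fin 2) ℂ)] b) p) :
    algMult (aeval ![X 0, X 1, (1 : MvPolynomial (Fin 2) ℂ)] a)
      (aeval ![X 0, X 1, (1 : MvPolynomial (Fin 2) ℂ)] b) s ≤ 1 := by
  by_contra hcon
  push_neg at hcon
  have hs : 2 ≤ algMult (aeval ![X 0, X 1, (1 : MvPolynomial (Fin 2) ℂ)] a)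
      (aeval ![X 0, X 1, (1 : MvPolynomial (Fin 2) ℂ)] b) s := hcon
  set v1 := s.1 - p.1 with hv1def
  set v2 := s.2 - p.2 with hv2def
  -- unpack the multiplicity assumptions into coefficient statements
  rw [algMult, le_min_iff] at hp hs
  have hpa := order_coeff hp.1
  have hpb := order_coeff hp.2
  have hsa := order_coeff hs.1
  have hsb := order_coeff hs.2
  -- the restriction to the line through p and s vanishes
  have affine_vanish : ∀ (h : MvPolynomial (Fin 3) ℂ), h.IsHomogeneous 4 →
      (∀ m : Fin 2 →₀ ℕ, MvPolynomial.coeff m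
        (aeval ![(X 0 : MvPolynomial (Fin 2) ℂ) + C p.1, X 1 + C p.2]
          (aeval ![X 0, X 1, (1 : MvPolynomial (Fin 2) ℂ)] h)) ≠ 0 → 3 ≤ m 0 + m 1) →
      (∀ m : Fin 2 →₀ ℕ, MvPolynomial.coeff m
        (aeval ![(X 0 : MvPolynomial (Fin 2) ℂ) + C s.1, X 1 + C s.2]
          (aeval ![X 0, X 1, (1 : MvPolynomial (Fin 2) ℂ)] h)) ≠ 0 → 2 ≤ m 0 + m 1) →
      ∀ t : ℂ, MvPolynomial.eval ![p.1 + t * v1, p.2 + t * v2, 1] h = 0 := by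
    intro h h4 hcp hcs
    set u : Polynomial ℂ := MvPolynomial.aeval
      ![Polynomial.C p.1 + Polynomial.C v1 * Polynomial.X,
        Polynomial.C p.2 + Polynomial.C v2 * Polynomial.X, 1] h with hudef
    have hucomp : ∀ (g : Polynomial ℂ) (q1 q2 : ℂ),
        MvPolynomial.aeval ![Polynomial.C q1 + Polynomial.C v1 * g,
          Polynomial.C q2 + Polynomial.C v2 * g]
          (aeval ![X 0, X 1, (1 : MvPolynomial (Fin 2) ℂ)] h)
        = MvPolynomial.aeval ![Polynomial.C q1 + Polynomial.C v1 * g,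
            Polynomial.C q2 + Polynomial.C v2 * g, 1] h := by
      intro g q1 q2
      rw [← AlgHom.comp_apply, comp_aeval]
      congr 1
      apply MvPolynomial.algHom_ext
      intro i
      rw [aeval_X, aeval_X]
      fin_cases i <;> simp
    have hdvd1 : Polynomial.X ^ 3 ∣ u := by
      have := pow_dvd_aeval hcp v1 v2 Polynomial.X
      rwa [hucomp] at this
    have hdvd2 : (Polynomial.X - Polynomial.C 1) ^ 2 ∣ u := by
      have := pow_dvd_aeval hcs v1 v2 (Polynomial.X - Polynomial.C 1)
      rw [hucomp] at this
      have harr : (![Polynomial.C s.1 + Polynomial.C v1 * (Polynomial.X - Polynomial.C 1),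
          Polynomial.C s.2 + Polynomial.C v2 * (Polynomial.X - Polynomial.C 1), 1]
            : Fin 3 → Polynomial ℂ)
          = ![Polynomial.C p.1 + Polynomial.C v1 * Polynomial.X,
              Polynomial.C p.2 + Polynomial.C v2 * Polynomial.X, 1] := by
        funext i
        have e1 : Polynomial.C v1 = Polynomial.C s.1 - Polynomial.C p.1 := by
          rw [hv1def, map_sub]
        have e2 : Polynomial.C v2 = Polynomial.C s.2 - Polynomial.C p.2 := by
          rw [hv2def, map_sub]
        fin_cases i <;> simp [e1, e2] <;> ring
      rwa [harr] at this
    have hcop : IsCoprime ((Polynomial.X : Polynomial ℂ) ^ 3)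
        ((Polynomial.X - Polynomial.C 1) ^ 2) := by
      apply IsCoprime.pow
      exact ⟨1, -1, by ring_nf; simp⟩
    have hu0 : u = 0 := by
      by_contra hne
      have hdeg : u.natDegree ≤ 4 := by
        apply natDegree_aeval_le h4
        intro i
        fin_cases i
        · exact (Polynomial.natDegree_add_le _ _).trans
            (by simp [Polynomial.natDegree_C]
                exact (Polynomial.natDegree_C_mul_le _ _).trans (by simp))
        · exact (Polynomial.natDegree_add_le _ _).trans
            (by simp [Polynomial.natDegree_C]
                exact (Polynomial.natDegree_C_mul_le _ _).trans (by simp))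
        · simp
      have h5 : ((Polynomial.X : Polynomial ℂ) ^ 3
          * (Polynomial.X - Polynomial.C 1) ^ 2).natDegree ≤ u.natDegree :=
        Polynomial.natDegree_le_of_dvd (hcop.mul_dvd hdvd1 hdvd2) hne
      have hm1 : ((Polynomial.X : Polynomial ℂ) ^ 3).Monic := Polynomial.monic_X_pow 3
      have hm2 : ((Polynomial.X - Polynomial.C 1 : Polynomial ℂ) ^ 2).Monic :=
        (Polynomial.monic_X_sub_C 1).pow 2
      rw [Polynomial.natDegree_mul hm1.ne_zero hm2.ne_zero, Polynomial.natDegree_pow,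
        Polynomial.natDegree_pow, Polynomial.natDegree_X, Polynomial.natDegree_X_sub_C] at h5
      omega
    intro t
    have : Polynomial.eval t u = MvPolynomial.eval ![p.1 + t * v1, p.2 + t * v2, 1] h := by
      have hc2 : (Polynomial.aeval t).comp (MvPolynomial.aeval
          ![Polynomial.C p.1 + Polynomial.C v1 * Polynomial.X,
            Polynomial.C p.2 + Polynomial.C v2 * Polynomial.X, 1]) h
          = MvPolynomial.aeval ![p.1 + t * v1, p.2 + t * v2, 1] h := by
        rw [comp_aeval]
        congr 1
        apply MvPolynomial.algHom_ext
        intro i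
        rw [aeval_X, aeval_X]
        fin_cases i <;> simp <;> try ring
      have h2 : Polynomial.eval t u = Polynomial.aeval t u :=
        (congrFun (Polynomial.coe_aeval_eq_eval t) u).symm
      rw [h2, hudef, ← aeval_eq_eval, ← hc2]
      rfl
    rw [← this, hu0, Polynomial.eval_zero]
  have hvana := affine_vanish a ha hpa hsa
  have hvanb := affine_vanish b hb hpb hsb
  have hvanc : ∀ t : ℂ, MvPolynomial.eval ![p.1 + t * v1, p.2 + t * v2, 1] c = 0 := by
    intro t
    have he := congrArg (MvPolynomial.eval ![p.1 + t * v1, p.2 + t * v2, 1]) heuler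
    simp only [map_add, map_mul, eval_X, map_zero] at he
    have h0 : (![p.1 + t * v1, p.2 + t * v2, 1] : Fin 3 → ℂ) 2 = 1 := rfl
    simp only [Matrix.cons_val_zero, Matrix.cons_val_one, Matrix.head_cons] at he
    rw [hvana t, hvanb t] at he
    simpa [h0] using he
  -- choose w with determinant 1
  have hvne : ¬(v1 = 0 ∧ v2 = 0) := by
    rintro ⟨h1, h2⟩
    apply hps
    have e1 : s.1 = p.1 := by rw [hv1def] at h1; exact sub_eq_zero.mp h1
    have e2 : s.2 = p.2 := by rw [hv2def] at h2; exact sub_eq_zero.mp h2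
    exact Prod.ext e1 e2
  obtain ⟨w1, w2, hdet⟩ : ∃ w1 w2 : ℂ, v1 * w2 - v2 * w1 = 1 := by
    by_cases h1 : v1 = 0
    · have h2 : v2 ≠ 0 := fun h2 => hvne ⟨h1, h2⟩
      exact ⟨-v2⁻¹, 0, by field_simp; ring⟩
    · exact ⟨0, v1⁻¹, by field_simp; ring⟩
  have hla := plane_dvd ha hdet hvana
  have hlb := plane_dvd hb hdet hvanb
  have hlc := plane_dvd hc hdet hvanc
  have hunit := hsat _ hla hlb hlc
  have := hunit.map (MvPolynomial.eval ![p.1, p.2, 1])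
  simp only [map_add, map_mul, map_neg, map_sub, eval_C, eval_X,
    Matrix.cons_val_zero, Matrix.cons_val_one, Matrix.head_cons] at this
  have hz : -v2 * (p.1 - p.1 * 1) + v1 * (p.2 - p.2 * 1) = (0 : ℂ) := by ring
  rw [show (![p.1, p.2, 1] : Fin 3 → ℂ) 2 = 1 from rfl] at this
  rw [hz] at this
  exact (by simpa using this : False)
end

section
/- With the notation of the previous lemma (ω_i = dy + y^a h_i dx, y ∤ h_{ij} for i≠j), the curvature dη = (∂_x V − ∂_y U) dx∧dy of the 3-web ω₁ω₂ω₃ = 0 is holomorphic along {y=0} if and only if y^a divides ∂_x[(h₁₂ ∂_x h₂₃ − h₂₃ ∂_x h₁₂)/(h₁₂ h₂₃ h₃₁)]. -/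
set_option maxHeartbeats 1000000

open Topology Filter

/-- Partial derivative with respect to the first variable. -/
noncomputable def pd1 (f : ℂ × ℂ → ℂ) (z : ℂ × ℂ) : ℂ := fderiv ℂ f z (1, 0)

/-- Partial derivative with respect to the second variable. -/
noncomputable def pd2 (f : ℂ × ℂ → ℂ) (z : ℂ × ℂ) : ℂ := fderiv ℂ f z (0, 1)

lemma pd1_analyticAt {f : ℂ × ℂ → ℂ} {z : ℂ × ℂ} (hf : AnalyticAt ℂ f z) :
    AnalyticAt ℂ (pd1 f) z :=
  ((ContinuousLinearMap.apply ℂ ℂ ((1:ℂ), (0:ℂ))).analyticAt _).comp hf.fderiv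

lemma pd2_analyticAt {f : ℂ × ℂ → ℂ} {z : ℂ × ℂ} (hf : AnalyticAt ℂ f z) :
    AnalyticAt ℂ (pd2 f) z :=
  ((ContinuousLinearMap.apply ℂ ℂ ((0:ℂ), (1:ℂ))).analyticAt _).comp hf.fderiv

lemma pd1_mul {f g : ℂ × ℂ → ℂ} {z : ℂ × ℂ} (hf : DifferentiableAt ℂ f z)
    (hg : DifferentiableAt ℂ g z) :
    pd1 (fun w => f w * g w) z = f z * pd1 g z + g z * pd1 f z := by
  simp [pd1, fderiv_fun_mul hf hg, smul_eq_mul]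

lemma pd2_mul {f g : ℂ × ℂ → ℂ} {z : ℂ × ℂ} (hf : DifferentiableAt ℂ f z)
    (hg : DifferentiableAt ℂ g z) :
    pd2 (fun w => f w * g w) z = f z * pd2 g z + g z * pd2 f z := by
  simp [pd2, fderiv_fun_mul hf hg, smul_eq_mul]

lemma hasFDerivAt_sndpow (m : ℕ) (z : ℂ × ℂ) :
    HasFDerivAt (fun w : ℂ × ℂ => w.2 ^ m)
      ((ContinuousLinearMap.smulRight (1 : ℂ →L[ℂ] ℂ) ((m : ℂ) * z.2 ^ (m - 1))).comp
        (ContinuousLinearMap.snd ℂ ℂ ℂ)) z :=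
  ((hasDerivAt_pow m z.2).hasFDerivAt).comp z (hasFDerivAt_snd (p := z) (𝕜 := ℂ))

lemma pd1_sndpow (m : ℕ) (z : ℂ × ℂ) : pd1 (fun w : ℂ × ℂ => w.2 ^ m) z = 0 := by
  simp [pd1, (hasFDerivAt_sndpow m z).fderiv]

lemma pd2_sndpow (m : ℕ) (z : ℂ × ℂ) :
    pd2 (fun w : ℂ × ℂ => w.2 ^ m) z = (m : ℂ) * z.2 ^ (m - 1) := by
  simp [pd2, (hasFDerivAt_sndpow m z).fderiv]

lemma pd1_comp_snd {φ : ℂ → ℂ} {z : ℂ × ℂ} (hφ : DifferentiableAt ℂ φ z.2) :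
    pd1 (fun w : ℂ × ℂ => φ w.2) z = 0 := by
  have h := (hφ.hasDerivAt.hasFDerivAt).comp z (hasFDerivAt_snd (p := z) (𝕜 := ℂ))
  have he : (fun w : ℂ × ℂ => φ w.2) = φ ∘ Prod.snd := rfl
  simp [pd1, he, h.fderiv]

lemma pd1_neg {f : ℂ × ℂ → ℂ} {z : ℂ × ℂ} : pd1 (fun w => -f w) z = -pd1 f z := by
  simp [pd1, fderiv_neg]

lemma pd1_add {f g : ℂ × ℂ → ℂ} {z : ℂ × ℂ} (hf : DifferentiableAt ℂ f z)
    (hg : DifferentiableAt ℂ g z) :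
    pd1 (fun w => f w + g w) z = pd1 f z + pd1 g z := by
  simp [pd1, fderiv_fun_add hf hg]

lemma pd1_pow_mul {g : ℂ × ℂ → ℂ} {z : ℂ × ℂ} (hg : DifferentiableAt ℂ g z) (m : ℕ) :
    pd1 (fun w => w.2 ^ m * g w) z = z.2 ^ m * pd1 g z := by
  have h := (hasFDerivAt_sndpow m z).mul hg.hasFDerivAt
  unfold pd1
  rw [show (fun w : ℂ × ℂ => w.2 ^ m * g w) = (fun w : ℂ × ℂ => w.2 ^ m) * g from rfl, h.fderiv]
  simp [smul_eq_mul]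

lemma pd2_pow_mul {g : ℂ × ℂ → ℂ} {z : ℂ × ℂ} (hg : DifferentiableAt ℂ g z) (m : ℕ) :
    pd2 (fun w => w.2 ^ m * g w) z
      = (m : ℂ) * z.2 ^ (m - 1) * g z + z.2 ^ m * pd2 g z := by
  have h := (hasFDerivAt_sndpow m z).mul hg.hasFDerivAt
  unfold pd2
  rw [show (fun w : ℂ × ℂ => w.2 ^ m * g w) = (fun w : ℂ × ℂ => w.2 ^ m) * g from rfl, h.fderiv]
  simp [smul_eq_mul]
  ring

/-- continuous extension from the punctured neighborhood -/
lemma ext_of_punctured {f g : ℂ × ℂ → ℂ} {p : ℂ × ℂ}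
    (hf : ∀ᶠ z in nhds p, ContinuousAt f z) (hg : ∀ᶠ z in nhds p, ContinuousAt g z)
    (h : ∀ᶠ z in nhds p, z.2 ≠ 0 → f z = g z) : ∀ᶠ z in nhds p, f z = g z := by
  filter_upwards [h.eventually_nhds, hf, hg] with z hz hfz hgz
  by_cases hz2 : z.2 = 0
  · set L := Filter.map (fun t : ℂ => (z.1, t)) (𝓝[≠] z.2) with hLdef
    have hne : (𝓝[≠] z.2).NeBot := NormedField.nhdsNE_neBot z.2
    have hLne : L.NeBot := Filter.NeBot.map hne _
    have hL : L ≤ nhds z := by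
      rw [hLdef, Filter.map_le_iff_le_comap]
      have : Filter.Tendsto (fun t : ℂ => (z.1, t)) (nhds z.2) (nhds z) := by
        have := ((continuous_const (y := z.1)).prodMk (continuous_id (X := ℂ))).tendsto z.2
        have hzz : z = (z.1, z.2) := rfl
        rw [hzz]
        exact this
      exact (this.mono_left nhdsWithin_le_nhds).le_comap
    have hfg : ∀ᶠ w in L, f w = g w := by
      have h1 : ∀ᶠ w in L, w.2 ≠ 0 → f w = g w := hL hz
      have h2 : ∀ᶠ w in L, w.2 ≠ 0 := by
        rw [hLdef, Filter.eventually_map]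
        exact eventually_mem_nhdsWithin.mono (fun t ht => by simpa [hz2] using ht)
      filter_upwards [h1, h2] with w hw1 hw2 using hw1 hw2
    exact tendsto_nhds_unique ((hfz.tendsto.mono_left hL).congr' hfg)
      (hgz.tendsto.mono_left hL)
  · exact hz.self_of_nhds hz2

lemma solveVU (a : ℕ) (t A1 A2 A3 P1 P2 Q1 Q2 Vz Uz : ℂ)
    (ht : t ≠ 0) (n1 : A1 - A2 ≠ 0) (n2 : A2 - A3 ≠ 0) (n3 : A3 - A1 ≠ 0)
    (e0 : t^a * P1 - ((↑(a+a) : ℂ) * t^(a+a-1) * ((A1-A2) * A3) + t^(a+a) * Q1)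
      = t^a * (A1-A2) * (t^a * A3 * Vz - Uz))
    (e1 : t^a * P2 - ((↑(a+a) : ℂ) * t^(a+a-1) * ((A2-A3) * A1) + t^(a+a) * Q2)
      = t^a * (A2-A3) * (t^a * A1 * Vz - Uz)) :
    Vz = -(((A1-A2) * P2 - (A2-A3) * P1) / ((A1-A2)*(A2-A3)*(A3-A1)) * (t^a)⁻¹
        + ((↑(a+a) : ℂ) * t⁻¹ + (Q1/(A1-A2) - Q2/(A2-A3))/(A3-A1)))
    ∧ Uz = -(A3 * (((A1-A2) * P2 - (A2-A3) * P1) / ((A1-A2)*(A2-A3)*(A3-A1))))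
        - P1/(A1-A2)
        + t^a * (Q1/(A1-A2) - A3 * ((Q1/(A1-A2) - Q2/(A2-A3))/(A3-A1))) := by
  have hta : t ^ a ≠ 0 := pow_ne_zero a ht
  have hpow : t ^ (a+a) = t^a * t^a := pow_add t a a
  have hc : (↑(a+a) : ℂ) * t^(a+a-1) = (↑(a+a) : ℂ) * (t^a * t^a * t⁻¹) := by
    rcases a with _ | b
    · norm_num
    · rw [show (b+1)+(b+1)-1 = b+b+1 from by omega]
      field_simp
      ring
  rw [hpow, hc] at e0 e1
  set T := t ^ a with hT
  set c : ℂ := (↑(a+a) : ℂ) with hcdef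
  have e0' : t * (T * P1) - (c * (T * T) * ((A1-A2) * A3) + t * (T * T) * Q1)
      = t * (T * (A1-A2) * (T * A3 * Vz - Uz)) := by
    have hti : t * t⁻¹ = 1 := mul_inv_cancel₀ ht
    linear_combination t * e0 + c * (T*T) * ((A1-A2)*A3) * hti
  have e1' : t * (T * P2) - (c * (T * T) * ((A2-A3) * A1) + t * (T * T) * Q2)
      = t * (T * (A2-A3) * (T * A1 * Vz - Uz)) := by
    have hti : t * t⁻¹ = 1 := mul_inv_cancel₀ ht
    linear_combination t * e1 + c * (T*T) * ((A2-A3)*A1) * hti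
  have hD : (A1-A2)*(A2-A3)*(A3-A1) ≠ 0 := mul_ne_zero (mul_ne_zero n1 n2) n3
  have key : t * (T * T * ((A1-A2)*(A2-A3)*(A3-A1))) * Vz
      = t * T * ((A2-A3) * P1 - (A1-A2) * P2) - c * (T * T) * ((A1-A2)*(A2-A3)*(A3-A1))
        - t * (T * T) * ((A2-A3) * Q1 - (A1-A2) * Q2) := by
    linear_combination (A1-A2) * e1' - (A2-A3) * e0'
  constructor
  · have key2 : t * (T * T * ((A1-A2)*(A2-A3)*(A3-A1))) *
        (-(((A1-A2) * P2 - (A2-A3) * P1) / ((A1-A2)*(A2-A3)*(A3-A1)) * T⁻¹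
        + (c * t⁻¹ + (Q1/(A1-A2) - Q2/(A2-A3))/(A3-A1))))
      = t * T * ((A2-A3) * P1 - (A1-A2) * P2) - c * (T * T) * ((A1-A2)*(A2-A3)*(A3-A1))
        - t * (T * T) * ((A2-A3) * Q1 - (A1-A2) * Q2) := by
      field_simp
      ring
    exact mul_left_cancel₀ (mul_ne_zero ht (mul_ne_zero (mul_ne_zero hta hta) hD))
      (key.trans key2.symm)
  · have keyU : t * (T * ((A1-A2) * ((A1-A2)*(A2-A3)*(A3-A1)))) * Uz
        = (A1-A2) * A3 * (t * T * ((A2-A3) * P1 - (A1-A2) * P2)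
            - c * (T * T) * ((A1-A2)*(A2-A3)*(A3-A1))
            - t * (T * T) * ((A2-A3) * Q1 - (A1-A2) * Q2))
          - ((A1-A2)*(A2-A3)*(A3-A1)) * (t * (T * P1)
            - (c * (T * T) * ((A1-A2) * A3) + t * (T * T) * Q1)) := by
      linear_combination (A1-A2) * A3 * key + ((A1-A2)*(A2-A3)*(A3-A1)) * e0'
    have keyU2 : t * (T * ((A1-A2) * ((A1-A2)*(A2-A3)*(A3-A1)))) *
        (-(A3 * (((A1-A2) * P2 - (A2-A3) * P1) / ((A1-A2)*(A2-A3)*(A3-A1))))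
          - P1/(A1-A2)
          + T * (Q1/(A1-A2) - A3 * ((Q1/(A1-A2) - Q2/(A2-A3))/(A3-A1))))
        = (A1-A2) * A3 * (t * T * ((A2-A3) * P1 - (A1-A2) * P2)
            - c * (T * T) * ((A1-A2)*(A2-A3)*(A3-A1))
            - t * (T * T) * ((A2-A3) * Q1 - (A1-A2) * Q2))
          - ((A1-A2)*(A2-A3)*(A3-A1)) * (t * (T * P1)
            - (c * (T * T) * ((A1-A2) * A3) + t * (T * T) * Q1)) := by
      field_simp
      ring
    exact mul_left_cancel₀
      (mul_ne_zero ht (mul_ne_zero hta (mul_ne_zero n1 hD)))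
      (keyU.trans keyU2.symm)

/-- With the notation of the previous lemma (`ωᵢ = dy + y^a hᵢ dx`,
`y ∤ hᵢⱼ = hᵢ - hⱼ` for `i ≠ j`, near a generic point `(x₀,0)` of `{y = 0}`, and
`η = U dx + V dy` the unique 1-form with `d(δᵢⱼωₖ) = δᵢⱼωₖ ∧ η` for cyclic `(i,j,k)`), the
curvature `dη = (∂ₓV - ∂_yU) dx ∧ dy` of the 3-web `ω₁ω₂ω₃ = 0` is holomorphic along `{y = 0}`
if and only if `y^a` divides `∂ₓ[(h₁₂ ∂ₓh₂₃ - h₂₃ ∂ₓh₁₂)/(h₁₂ h₂₃ h₃₁)]`. -/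
theorem stmt10 (a : ℕ) (h₁ h₂ h₃ U V : ℂ × ℂ → ℂ) (x₀ : ℂ)
    (H1 : AnalyticAt ℂ h₁ (x₀, 0)) (H2 : AnalyticAt ℂ h₂ (x₀, 0))
    (H3 : AnalyticAt ℂ h₃ (x₀, 0))
    (h12 : h₁ (x₀, 0) ≠ h₂ (x₀, 0)) (h23 : h₂ (x₀, 0) ≠ h₃ (x₀, 0))
    (h31 : h₃ (x₀, 0) ≠ h₁ (x₀, 0))
    (hUV : ∀ᶠ z : ℂ × ℂ in nhds (x₀, 0), z.2 ≠ 0 → AnalyticAt ℂ U z ∧ AnalyticAt ℂ V z)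
    (heq : ∀ i : Fin 3, ∀ᶠ z : ℂ × ℂ in nhds (x₀, 0), z.2 ≠ 0 →
      (pd1 (fun w => w.2 ^ a * (![h₁, h₂, h₃] i w - ![h₂, h₃, h₁] i w)) z
        - pd2 (fun w => w.2 ^ a * (![h₁, h₂, h₃] i w - ![h₂, h₃, h₁] i w)
            * (w.2 ^ a * ![h₃, h₁, h₂] i w)) z)
      = z.2 ^ a * (![h₁, h₂, h₃] i z - ![h₂, h₃, h₁] i z)
          * (z.2 ^ a * ![h₃, h₁, h₂] i z * V z - U z)) :
    (∃ K : ℂ × ℂ → ℂ, AnalyticAt ℂ K (x₀, 0) ∧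
        ∀ᶠ z : ℂ × ℂ in nhds (x₀, 0), z.2 ≠ 0 → K z = pd1 V z - pd2 U z)
    ↔ (∃ g : ℂ × ℂ → ℂ, AnalyticAt ℂ g (x₀, 0) ∧
        ∀ᶠ z : ℂ × ℂ in nhds (x₀, 0),
          pd1 (fun w => ((h₁ w - h₂ w) * pd1 (fun u => h₂ u - h₃ u) w
              - (h₂ w - h₃ w) * pd1 (fun u => h₁ u - h₂ u) w)
            / ((h₁ w - h₂ w) * (h₂ w - h₃ w) * (h₃ w - h₁ w))) z
          = z.2 ^ a * g z) := by
  -- context of analyticity and non-vanishing near the base point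
  have hAn : ∀ᶠ z : ℂ × ℂ in nhds (x₀, 0),
      (AnalyticAt ℂ h₁ z ∧ AnalyticAt ℂ h₂ z ∧ AnalyticAt ℂ h₃ z) ∧
      (h₁ z - h₂ z ≠ 0 ∧ h₂ z - h₃ z ≠ 0 ∧ h₃ z - h₁ z ≠ 0) := by
    have n1 := ((H1.sub H2).continuousAt).eventually_ne (sub_ne_zero.mpr h12)
    have n2 := ((H2.sub H3).continuousAt).eventually_ne (sub_ne_zero.mpr h23)
    have n3 := ((H3.sub H1).continuousAt).eventually_ne (sub_ne_zero.mpr h31)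
    filter_upwards [H1.eventually_analyticAt, H2.eventually_analyticAt,
      H3.eventually_analyticAt, n1, n2, n3] with z a1 a2 a3 m1 m2 m3
    exact ⟨⟨a1, a2, a3⟩, m1, m2, m3⟩
  set F := fun w : ℂ × ℂ => ((h₁ w - h₂ w) * pd1 (fun u => h₂ u - h₃ u) w
      - (h₂ w - h₃ w) * pd1 (fun u => h₁ u - h₂ u) w)
      / ((h₁ w - h₂ w) * (h₂ w - h₃ w) * (h₃ w - h₁ w)) with hF
  set S := fun w : ℂ × ℂ => (pd2 (fun u => (h₁ u - h₂ u) * h₃ u) w / (h₁ w - h₂ w)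
      - pd2 (fun u => (h₂ u - h₃ u) * h₁ u) w / (h₂ w - h₃ w)) / (h₃ w - h₁ w) with hS
  set B := fun w : ℂ × ℂ => -(h₃ w * F w)
      - pd1 (fun u => h₁ u - h₂ u) w / (h₁ w - h₂ w)
      + w.2 ^ a * (pd2 (fun u => (h₁ u - h₂ u) * h₃ u) w / (h₁ w - h₂ w)
          - h₃ w * S w) with hB
  have hFSB : ∀ᶠ z : ℂ × ℂ in nhds (x₀, 0),
      AnalyticAt ℂ F z ∧ AnalyticAt ℂ S z ∧ AnalyticAt ℂ B z := by
    filter_upwards [hAn] with z hz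
    obtain ⟨⟨a1, a2, a3⟩, n1, n2, n3⟩ := hz
    have p1 : AnalyticAt ℂ (pd1 (fun u => h₁ u - h₂ u)) z := pd1_analyticAt (a1.sub a2)
    have p2 : AnalyticAt ℂ (pd1 (fun u => h₂ u - h₃ u)) z := pd1_analyticAt (a2.sub a3)
    have q1 : AnalyticAt ℂ (pd2 (fun u => (h₁ u - h₂ u) * h₃ u)) z :=
      pd2_analyticAt ((a1.sub a2).mul a3)
    have q2 : AnalyticAt ℂ (pd2 (fun u => (h₂ u - h₃ u) * h₁ u)) z :=
      pd2_analyticAt ((a2.sub a3).mul a1)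
    have hD : (h₁ z - h₂ z) * (h₂ z - h₃ z) * (h₃ z - h₁ z) ≠ 0 :=
      mul_ne_zero (mul_ne_zero n1 n2) n3
    have hFz : AnalyticAt ℂ F z :=
      (((a1.sub a2).mul p2).sub ((a2.sub a3).mul p1)).div
        (((a1.sub a2).mul (a2.sub a3)).mul (a3.sub a1)) hD
    have hSz : AnalyticAt ℂ S z :=
      ((q1.div (a1.sub a2) n1).sub (q2.div (a2.sub a3) n2)).div (a3.sub a1) n3
    have hBz : AnalyticAt ℂ B z := by
      have hsp : AnalyticAt ℂ (fun w : ℂ × ℂ => w.2 ^ a) z := (analyticAt_snd).pow a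
      exact ((a3.mul hFz).neg.sub (p1.div (a1.sub a2) n1)).add
        (hsp.mul ((q1.div (a1.sub a2) n1).sub (a3.mul hSz)))
    exact ⟨hFz, hSz, hBz⟩
  have he0 := heq 0
  have he1 := heq 1
  simp only [Matrix.cons_val_zero, Matrix.cons_val_one, Matrix.head_cons] at he0 he1
  -- Step 1: explicit formulas for U, V off the axis
  have hVU : ∀ᶠ z : ℂ × ℂ in nhds (x₀, 0), z.2 ≠ 0 →
      (V z = -(F z * (z.2 ^ a)⁻¹ + ((↑(a+a) : ℂ) * z.2⁻¹ + S z)) ∧ U z = B z) := by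
    filter_upwards [hAn, he0, he1] with z hz e0 e1 ht
    obtain ⟨⟨a1, a2, a3⟩, n1, n2, n3⟩ := hz
    have d1 : DifferentiableAt ℂ (fun u => h₁ u - h₂ u) z :=
      (a1.differentiableAt).sub (a2.differentiableAt)
    have d2 : DifferentiableAt ℂ (fun u => h₂ u - h₃ u) z :=
      (a2.differentiableAt).sub (a3.differentiableAt)
    have dG1 : DifferentiableAt ℂ (fun u => (h₁ u - h₂ u) * h₃ u) z :=
      d1.mul a3.differentiableAt
    have dG2 : DifferentiableAt ℂ (fun u => (h₂ u - h₃ u) * h₁ u) z :=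
      d2.mul a1.differentiableAt
    have E0 := e0 ht
    have E1 := e1 ht
    have hfun0 : (fun w : ℂ × ℂ => w.2 ^ a * (h₁ w - h₂ w) * (w.2 ^ a * h₃ w))
        = fun w : ℂ × ℂ => w.2 ^ (a+a) * ((h₁ w - h₂ w) * h₃ w) := by
      funext w; rw [pow_add]; ring
    have hfun1 : (fun w : ℂ × ℂ => w.2 ^ a * (h₂ w - h₃ w) * (w.2 ^ a * h₁ w))
        = fun w : ℂ × ℂ => w.2 ^ (a+a) * ((h₂ w - h₃ w) * h₁ w) := by
      funext w; rw [pow_add]; ring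
    rw [hfun0] at E0
    rw [hfun1] at E1
    have r0 : pd1 (fun w : ℂ × ℂ => w.2 ^ a * (h₁ w - h₂ w)) z
        = z.2 ^ a * pd1 (fun u => h₁ u - h₂ u) z := pd1_pow_mul d1 a
    have r1 : pd1 (fun w : ℂ × ℂ => w.2 ^ a * (h₂ w - h₃ w)) z
        = z.2 ^ a * pd1 (fun u => h₂ u - h₃ u) z := pd1_pow_mul d2 a
    have s0 : pd2 (fun w : ℂ × ℂ => w.2 ^ (a+a) * ((h₁ w - h₂ w) * h₃ w)) z
        = (↑(a+a) : ℂ) * z.2 ^ (a+a-1) * ((h₁ z - h₂ z) * h₃ z)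
          + z.2 ^ (a+a) * pd2 (fun u => (h₁ u - h₂ u) * h₃ u) z := pd2_pow_mul dG1 (a+a)
    have s1 : pd2 (fun w : ℂ × ℂ => w.2 ^ (a+a) * ((h₂ w - h₃ w) * h₁ w)) z
        = (↑(a+a) : ℂ) * z.2 ^ (a+a-1) * ((h₂ z - h₃ z) * h₁ z)
          + z.2 ^ (a+a) * pd2 (fun u => (h₂ u - h₃ u) * h₁ u) z := pd2_pow_mul dG2 (a+a)
    rw [r0, s0] at E0
    rw [r1, s1] at E1
    have hsol := solveVU a z.2 (h₁ z) (h₂ z) (h₃ z)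
      (pd1 (fun u => h₁ u - h₂ u) z) (pd1 (fun u => h₂ u - h₃ u) z)
      (pd2 (fun u => (h₁ u - h₂ u) * h₃ u) z) (pd2 (fun u => (h₂ u - h₃ u) * h₁ u) z)
      (V z) (U z) ht n1 n2 n3 E0 E1
    exact hsol
  -- Step 2: curvature formula off the axis
  have hPD : ∀ᶠ z : ℂ × ℂ in nhds (x₀, 0), z.2 ≠ 0 →
      pd1 V z - pd2 U z = -(pd1 F z * (z.2 ^ a)⁻¹) - (pd1 S z + pd2 B z) := by
    filter_upwards [hVU.eventually_nhds, hFSB] with z hz hzF ht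
    obtain ⟨aF, aS, aB⟩ := hzF
    have hsne : ∀ᶠ w : ℂ × ℂ in nhds z, w.2 ≠ 0 :=
      (continuous_snd.continuousAt).eventually_ne ht
    have hVf : V =ᶠ[nhds z]
        (fun w => -(F w * (w.2 ^ a)⁻¹ + ((↑(a+a) : ℂ) * w.2⁻¹ + S w))) := by
      filter_upwards [hz, hsne] with w hw hw2 using (hw hw2).1
    have hUf : U =ᶠ[nhds z] B := by
      filter_upwards [hz, hsne] with w hw hw2 using (hw hw2).2
    have hpd2U : pd2 U z = pd2 B z := by unfold pd2; rw [hUf.fderiv_eq]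
    have dF := aF.differentiableAt
    have dS := aS.differentiableAt
    have dpow : DifferentiableAt ℂ (fun w : ℂ × ℂ => (w.2 ^ a)⁻¹) z :=
      (differentiableAt_snd.pow a).inv (pow_ne_zero a ht)
    have dcinv : DifferentiableAt ℂ (fun w : ℂ × ℂ => (↑(a+a) : ℂ) * w.2⁻¹) z :=
      (differentiableAt_snd.inv ht).const_mul _
    have h2 : pd1 V z
        = pd1 (fun w => -(F w * (w.2 ^ a)⁻¹ + ((↑(a+a) : ℂ) * w.2⁻¹ + S w))) z := by
      unfold pd1; rw [hVf.fderiv_eq]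
    have h3 : pd1 (fun w => -(F w * (w.2 ^ a)⁻¹ + ((↑(a+a) : ℂ) * w.2⁻¹ + S w))) z
        = -pd1 (fun w => F w * (w.2 ^ a)⁻¹ + ((↑(a+a) : ℂ) * w.2⁻¹ + S w)) z := pd1_neg
    have h4 : pd1 (fun w => F w * (w.2 ^ a)⁻¹ + ((↑(a+a) : ℂ) * w.2⁻¹ + S w)) z
        = pd1 (fun w => F w * (w.2 ^ a)⁻¹) z
          + pd1 (fun w => (↑(a+a) : ℂ) * w.2⁻¹ + S w) z :=
      pd1_add (dF.mul dpow) (dcinv.add dS)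
    have h5 : pd1 (fun w => F w * (w.2 ^ a)⁻¹) z
        = F z * pd1 (fun w : ℂ × ℂ => (w.2 ^ a)⁻¹) z + (z.2 ^ a)⁻¹ * pd1 F z :=
      pd1_mul dF dpow
    have h6 : pd1 (fun w : ℂ × ℂ => (w.2 ^ a)⁻¹) z = 0 :=
      pd1_comp_snd (φ := fun s : ℂ => (s ^ a)⁻¹)
        ((differentiableAt_pow a).inv (pow_ne_zero a ht))
    have h7 : pd1 (fun w => (↑(a+a) : ℂ) * w.2⁻¹ + S w) z
        = pd1 (fun w : ℂ × ℂ => (↑(a+a) : ℂ) * w.2⁻¹) z + pd1 S z := pd1_add dcinv dS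
    have h8 : pd1 (fun w : ℂ × ℂ => (↑(a+a) : ℂ) * w.2⁻¹) z = 0 :=
      pd1_comp_snd (φ := fun s : ℂ => (↑(a+a) : ℂ) * s⁻¹)
        ((differentiableAt_inv ht).const_mul _)
    rw [h2, h3, h4, h5, h6, h7, h8, hpd2U]
    ring
  have hCan : AnalyticAt ℂ (fun z => pd1 S z + pd2 B z) (x₀, 0) := by
    obtain ⟨aF, aS, aB⟩ := hFSB.self_of_nhds
    exact (pd1_analyticAt aS).add (pd2_analyticAt aB)
  have hcontF : ∀ᶠ z : ℂ × ℂ in nhds (x₀, 0), ContinuousAt (fun z => pd1 F z) z :=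
    hFSB.mono fun z hz => (pd1_analyticAt hz.1).continuousAt
  constructor
  · rintro ⟨K, hK, hKeq⟩
    refine ⟨fun z => -K z - (pd1 S z + pd2 B z), (hK.neg).sub hCan, ?_⟩
    have hgc : ∀ᶠ z : ℂ × ℂ in nhds (x₀, 0),
        ContinuousAt (fun z : ℂ × ℂ => z.2 ^ a * (-K z - (pd1 S z + pd2 B z))) z := by
      filter_upwards [hK.eventually_analyticAt, hFSB] with z hKz hFz
      exact ((continuous_snd.pow a).continuousAt).mul
        ((hKz.continuousAt.neg).sub
          (((pd1_analyticAt hFz.2.1).continuousAt).add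
            ((pd2_analyticAt hFz.2.2).continuousAt)))
    apply ext_of_punctured hcontF hgc
    filter_upwards [hKeq, hPD] with z hk hp ht
    have hKz : K z = -(pd1 F z * (z.2 ^ a)⁻¹) - (pd1 S z + pd2 B z) :=
      (hk ht).trans (hp ht)
    have hta : (z.2 : ℂ) ^ a ≠ 0 := pow_ne_zero a ht
    rw [hKz]
    field_simp
    ring
  · rintro ⟨g, hg, hgeq⟩
    refine ⟨fun z => -g z - (pd1 S z + pd2 B z), (hg.neg).sub hCan, ?_⟩
    filter_upwards [hPD, hgeq] with z hp hge ht
    have hta : (z.2 : ℂ) ^ a ≠ 0 := pow_ne_zero a ht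
    rw [hp ht, hge]
    field_simp
end

section
/- Let F' be a saturated foliation on ℙ² given by a homogeneous vector field X', let P be a homogeneous polynomial with divisor C, and let F be the (non-saturated) foliation given by X = P·X'. Then the inflection divisors satisfy I(F) = I(F') + 3C. -/
open MvPolynomial

/-- Action of the homogeneous vector field `X = A∂x + B∂y + C∂z` on a polynomial. -/
noncomputable def applyVF (A B C f : MvPolynomial (Fin 3) ℂ) : MvPolynomial (Fin 3) ℂ :=
  A * pderiv 0 f + B * pderiv 1 f + C * pderiv 2 f

/-- The defining polynomial of the inflection divisor of the foliation given by the homogeneous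
vector field `X = A∂x + B∂y + C∂z`: the determinant with rows `(x,y,z)`, `(X(x),X(y),X(z))`,
`(X²(x),X²(y),X²(z))`. -/
noncomputable def inflDet (A B C : MvPolynomial (Fin 3) ℂ) : MvPolynomial (Fin 3) ℂ :=
  Matrix.det !![X 0, X 1, X 2; A, B, C;
    applyVF A B C A, applyVF A B C B, applyVF A B C C]


lemma applyVF_smul (A B C P f : MvPolynomial (Fin 3) ℂ) :
    applyVF (P * A) (P * B) (P * C) f = P * applyVF A B C f := by
  simp only [applyVF]; ring

lemma applyVF_mul (A B C f g : MvPolynomial (Fin 3) ℂ) :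
    applyVF A B C (f * g) = applyVF A B C f * g + f * applyVF A B C g := by
  simp only [applyVF, Derivation.leibniz, smul_eq_mul]; ring

/-- Let `F'` be a saturated foliation on `ℙ²` given by a homogeneous vector
field `X' = A∂x + B∂y + C∂z` of degree `d`, let `P` be a homogeneous polynomial with divisor `C`,
and let `F` be the (non-saturated) foliation given by `X = P·X'`.  Then the inflection divisors
satisfy `I(F) = I(F') + 3C`, i.e. at the level of defining polynomials the inflection determinant
of `P·X'` equals `P³` times that of `X'`. -/
theorem stmt13 (d m : ℕ) (A B C P : MvPolynomial (Fin 3) ℂ)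
    (hA : A.IsHomogeneous d) (hB : B.IsHomogeneous d) (hC : C.IsHomogeneous d)
    (hP : P.IsHomogeneous m)
    (hsat : ∀ e : MvPolynomial (Fin 3) ℂ,
      e ∣ (X 1 * C - X 2 * B) → e ∣ (X 2 * A - X 0 * C) → e ∣ (X 0 * B - X 1 * A) → IsUnit e) :
    inflDet (P * A) (P * B) (P * C) = P ^ 3 * inflDet A B C := by
  simp only [inflDet, applyVF_smul, applyVF_mul]
  simp only [Matrix.det_fin_three, Matrix.of_apply, Matrix.cons_val', Matrix.cons_val_zero,
    Matrix.empty_val', Matrix.cons_val_fin_one, Matrix.cons_val_one, Matrix.head_cons,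
    Matrix.head_fin_const, Matrix.cons_val_two, Matrix.tail_cons]
  ring
end

section
/- Let F be a homogeneous foliation of degree 3 on ℂ² induced by a homogeneous vector field X = A∂_x + B∂_y (A, B homogeneous of degree 3) whose inflection divisor I(F) is reduced. Then the tangent cone divisor {yA − xB = 0} is reduced, i.e., yA − xB has no repeated linear factor. -/
open MvPolynomial

private lemma X_mul_pderiv_monomial (i : Fin 2) (d : Fin 2 →₀ ℕ) (c : ℂ) :
    X i * pderiv i (monomial d c) = monomial d (c * d i) := by
  rw [pderiv_monomial]
  rcases eq_or_ne (d i) 0 with h | h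
  · simp [h]
  · have hle : Finsupp.single i 1 ≤ d := by
      rw [Finsupp.single_le_iff]
      omega
    have : X (R := ℂ) i = monomial (Finsupp.single i 1) 1 := by
      rw [← X_pow_eq_monomial, pow_one]
    rw [this, monomial_mul, one_mul]
    have hd' : Finsupp.single i 1 + (d - Finsupp.single i 1) = d := by
      rw [add_comm]; exact tsub_add_cancel_of_le hle
    rw [hd']

/-- Euler's identity for homogeneous polynomials in two variables. -/
private lemma euler {n : ℕ} {f : MvPolynomial (Fin 2) ℂ} (hf : f.IsHomogeneous n) :
    X 0 * pderiv 0 f + X 1 * pderiv 1 f = C (n : ℂ) * f := by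
  conv_lhs => rw [f.as_sum]
  conv_rhs => rw [f.as_sum]
  rw [map_sum (pderiv 0), map_sum (pderiv 1), Finset.mul_sum, Finset.mul_sum, Finset.mul_sum,
    ← Finset.sum_add_distrib]
  refine Finset.sum_congr rfl fun d hd => ?_
  have hdeg : d 0 + d 1 = n := by
    have h1 : Finsupp.weight 1 d = n := hf (mem_support_iff.mp hd)
    have h2 : Finsupp.degree d = n := by rw [Finsupp.degree_eq_weight_one]; exact h1
    rw [← h2, Finsupp.degree_apply]
    rw [Finset.sum_subset (Finset.subset_univ d.support) (fun x _ hx => by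
      simpa using Finsupp.notMem_support_iff.mp hx)]
    exact (Fin.sum_univ_two d).symm
  rw [_root_.X_mul_pderiv_monomial, _root_.X_mul_pderiv_monomial, C_mul_monomial, ← map_add (monomial d)]
  congr 1
  rw [← mul_add]
  have : ((d 0 : ℂ) + (d 1 : ℂ)) = (n : ℂ) := by
    rw [← Nat.cast_add, hdeg]
  rw [this]
  ring

/-- Let `F` be a homogeneous foliation of degree `3` on `ℂ²` induced by the
vector field `X = A∂x + B∂y` with `A, B` homogeneous cubics (viewed on `ℙ²` via the homogeneous
vector field `A(x,y)∂x + B(x,y)∂y` on `ℂ³`), and suppose the inflection divisor `I(F)` is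
reduced, i.e. its defining polynomial is squarefree.  Then the tangent cone divisor
`{yA - xB = 0}` is reduced: `yA - xB` has no repeated (linear) factor. -/
theorem stmt16 (A B : MvPolynomial (Fin 2) ℂ)
    (hA : A.IsHomogeneous 3) (hB : B.IsHomogeneous 3)
    (hred : Squarefree (inflDet (rename Fin.castSucc A) (rename Fin.castSucc B) 0)) :
    Squarefree ((X 1 : MvPolynomial (Fin 2) ℂ) * A - X 0 * B) := by
  -- notation
  set a0 := pderiv 0 A with ha0
  set a1 := pderiv 1 A with ha1
  set b0 := pderiv 0 B with hb0
  set b1 := pderiv 1 B with hb1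
  set T : MvPolynomial (Fin 2) ℂ := X 1 * A - X 0 * B with hT
  set DA : MvPolynomial (Fin 2) ℂ := A * a0 + B * a1 with hDA
  set DB : MvPolynomial (Fin 2) ℂ := A * b0 + B * b1 with hDB
  set W : MvPolynomial (Fin 2) ℂ := A * DB - B * DA with hW
  set J : MvPolynomial (Fin 2) ℂ := a0 * b1 - a1 * b0 with hJ
  -- Key algebraic identity from Euler's relations: 3 W = (x B - y A) J = -T * J
  have hEA : X 0 * a0 + X 1 * a1 = C (3 : ℂ) * A := by
    have := euler hA; simpa using this
  have hEB : X 0 * b0 + X 1 * b1 = C (3 : ℂ) * B := by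
    have := euler hB; simpa using this
  have key : C (3 : ℂ) * W = - (T * J) := by
    rw [hW, hT, hJ, hDA, hDB]
    linear_combination (A * a0 + B * a1) * hEB - (A * b0 + B * b1) * hEA
  have hWTQ : W = T * (C (-3⁻¹ : ℂ) * J) := by
    have h3 : (C (3 : ℂ) : MvPolynomial (Fin 2) ℂ) ≠ 0 := by
      simp [MvPolynomial.C_eq_zero]
    apply mul_left_cancel₀ h3
    rw [key]
    rw [show (C (-3⁻¹ : ℂ) : MvPolynomial (Fin 2) ℂ) = C (-3⁻¹ : ℂ) from rfl]
    have : (C (3:ℂ) : MvPolynomial (Fin 2) ℂ) * (T * (C (-3⁻¹:ℂ) * J))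
        = (C (3:ℂ) * C (-3⁻¹:ℂ)) * (T * J) := by ring
    rw [this, ← map_mul]
    norm_num
  -- compute the inflection determinant
  set ρ : MvPolynomial (Fin 2) ℂ →ₐ[ℂ] MvPolynomial (Fin 3) ℂ :=
    rename (Fin.castSucc : Fin 2 → Fin 3) with hρ
  have hcast : Function.Injective (Fin.castSucc : Fin 2 → Fin 3) :=
    Fin.castSucc_injective 2
  have hp2 : ∀ p : MvPolynomial (Fin 2) ℂ, pderiv 2 (ρ p) = 0 := by
    intro p
    apply pderiv_eq_zero_of_notMem_vars
    intro hmem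
    have := mem_vars_rename _ _ hmem
    obtain ⟨i, _, hi⟩ := this
    exact absurd hi (by fin_cases i <;> decide)
  have hp0 : ∀ p : MvPolynomial (Fin 2) ℂ, pderiv 0 (ρ p) = ρ (pderiv 0 p) := by
    intro p
    have := pderiv_rename hcast (0 : Fin 2) p
    simpa using this
  have hp1 : ∀ p : MvPolynomial (Fin 2) ℂ, pderiv 1 (ρ p) = ρ (pderiv 1 p) := by
    intro p
    have := pderiv_rename hcast (1 : Fin 2) p
    simpa using this
  have hVA : applyVF (ρ A) (ρ B) 0 (ρ A) = ρ DA := by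
    rw [applyVF, hp0, hp1, hp2]
    rw [hDA]
    simp [map_add, map_mul]
    rfl
  have hVB : applyVF (ρ A) (ρ B) 0 (ρ B) = ρ DB := by
    rw [applyVF, hp0, hp1, hp2]
    rw [hDB]
    simp [map_add, map_mul]
    rfl
  have hV0 : applyVF (ρ A) (ρ B) 0 0 = 0 := by
    rw [applyVF]; simp
  have hdet : inflDet (ρ A) (ρ B) 0 = X 2 * (ρ A * ρ DB - ρ B * ρ DA) := by
    rw [inflDet, hVA, hVB, hV0, Matrix.det_fin_three]
    simp [Matrix.cons_val_zero, Matrix.cons_val_one, Matrix.vecHead, Matrix.vecTail]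
    ring
  have hdvd : ρ T ∣ inflDet (ρ A) (ρ B) 0 := by
    rw [hdet]
    refine ⟨X 2 * ρ (C (-3⁻¹ : ℂ) * J), ?_⟩
    have : ρ A * ρ DB - ρ B * ρ DA = ρ W := by rw [hW]; simp [map_sub, map_mul]
    rw [this, hWTQ, map_mul]
    ring
  have hsqT : Squarefree (ρ T) := hred.squarefree_of_dvd hdvd
  -- pull back squarefreeness along the injective `rename`
  intro u hu
  have h1 : ρ u * ρ u ∣ ρ T := by
    rw [← map_mul]
    exact map_dvd ρ hu
  have h2 : IsUnit (ρ u) := hsqT (ρ u) h1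
  -- retract: aeval sending X0 ↦ X0, X1 ↦ X1, X2 ↦ 0
  set π : MvPolynomial (Fin 3) ℂ →ₐ[ℂ] MvPolynomial (Fin 2) ℂ :=
    aeval ![X 0, X 1, 0] with hπ
  have hπρ : ∀ p : MvPolynomial (Fin 2) ℂ, π (ρ p) = p := by
    intro p
    rw [hπ, hρ, aeval_rename]
    have : (![X 0, X 1, 0] ∘ (Fin.castSucc : Fin 2 → Fin 3)) = (X : Fin 2 → MvPolynomial (Fin 2) ℂ) := by
      funext i
      fin_cases i <;> simp
    rw [this]
    exact aeval_X_left_apply p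
  have := h2.map π
  rwa [hπρ] at this
end
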